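/- Removing a user with zero GDoF does not decrease the OPC/BPC gain: let α be a K-user topology (K ≥ 2) and r a power allocation achieving D_{Σ,o}(α) with d_i(α,r) = 0 for some user i. Let α' be the (K-1)-user topology obtained by deleting row and column i of α. Then D_{Σ,o}(α') ≥ D_{Σ,o}(α) and D_{Σ,b}(α') ≤ D_{Σ,b}(α), so D_{Σ,o}(α)/D_{Σ,b}(α) ≤ D_{Σ,o}(α')/D_{Σ,b}(α') whenever D_{Σ,b}(α') > 0. -/
import Mathlib


open Finset

/-- Positive part `(x)^+ = max(x,0)`. -/
noncomputable def pPart (x : ℝ) : ℝ := max x 0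

/-- TIN GDoF of user `k` under topology `α` and power allocation `r`:
`d_k(α,r) = (α_kk + r_k - max_{j≠k} (α_kj + r_j)^+)^+` (max over the empty set is 0). -/
noncomputable def gdof {K : ℕ} (α : Fin K → Fin K → ℝ) (r : Fin K → ℝ) (k : Fin K) : ℝ :=
  pPart (α k k + r k -
    ((Finset.univ.erase k).fold max 0 fun j => pPart (α k j + r j)))

/-- Sum GDoF under allocation `r`. -/
noncomputable def sumGdof {K : ℕ} (α : Fin K → Fin K → ℝ) (r : Fin K → ℝ) : ℝ :=
  ∑ k, gdof α r k

/-- Optimal-power-control sum GDoF: supremum over all allocations with `r_k ≤ 0`. -/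
noncomputable def Dopt {K : ℕ} (α : Fin K → Fin K → ℝ) : ℝ :=
  sSup {x : ℝ | ∃ r : Fin K → ℝ, (∀ k, r k ≤ 0) ∧ x = sumGdof α r}

/-- Sum GDoF achieved by binary power control with active set `T`:
`Σ_{k∈T} (α_kk - max_{j∈T, j≠k} α_kj)^+` (max over the empty set is 0). -/
noncomputable def binSum {K : ℕ} (α : Fin K → Fin K → ℝ) (T : Finset (Fin K)) : ℝ :=
  ∑ k ∈ T, pPart (α k k - ((T.erase k).fold max 0 fun j => α k j))

/-- Binary-power-control sum GDoF: maximum over all subsets of active users. -/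
noncomputable def Dbin {K : ℕ} (α : Fin K → Fin K → ℝ) : ℝ :=
  (Finset.univ : Finset (Finset (Fin K))).sup' ⟨∅, Finset.mem_univ ∅⟩ (binSum α)


lemma pPart_nonneg (x : ℝ) : 0 ≤ pPart x := le_max_right _ _
lemma pPart_mono {x y : ℝ} (h : x ≤ y) : pPart x ≤ pPart y := max_le_max h le_rfl

lemma fold_max_nonneg {β : Type*} (s : Finset β) (f : β → ℝ) : 0 ≤ s.fold max 0 f :=
  (Finset.le_fold_max _).mpr (Or.inl le_rfl)

lemma fold_max_mono {β : Type*} [DecidableEq β] {s t : Finset β} (h : s ⊆ t) (f : β → ℝ) :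
    s.fold max 0 f ≤ t.fold max 0 f :=
  (Finset.fold_max_le _).mpr ⟨fold_max_nonneg t f,
    fun x hx => (Finset.le_fold_max _).mpr (Or.inr ⟨x, h hx, le_rfl⟩)⟩

lemma gdof_nonneg {K : ℕ} (α : Fin K → Fin K → ℝ) (r : Fin K → ℝ) (k : Fin K) :
    0 ≤ gdof α r k := pPart_nonneg _

lemma gdof_le {K : ℕ} (α : Fin K → Fin K → ℝ) (hα : ∀ i j, 0 ≤ α i j)
    (r : Fin K → ℝ) (hr : ∀ k, r k ≤ 0) (k : Fin K) : gdof α r k ≤ α k k := by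
  unfold gdof
  have h1 : α k k + r k - ((Finset.univ.erase k).fold max 0 fun j => pPart (α k j + r j)) ≤ α k k := by
    have := fold_max_nonneg (Finset.univ.erase k) (fun j => pPart (α k j + r j))
    linarith [hr k]
  calc pPart _ ≤ pPart (α k k) := pPart_mono h1
    _ = α k k := max_eq_left (hα k k)

lemma bddAbove_gdofSet {K : ℕ} (α : Fin K → Fin K → ℝ) (hα : ∀ i j, 0 ≤ α i j) :
    BddAbove {x : ℝ | ∃ r : Fin K → ℝ, (∀ k, r k ≤ 0) ∧ x = sumGdof α r} := by
  refine ⟨∑ k, α k k, fun x hx => ?_⟩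
  obtain ⟨r, hr, rfl⟩ := hx
  exact Finset.sum_le_sum fun k _ => gdof_le α hα r hr k

lemma Dopt_nonneg {K : ℕ} (α : Fin K → Fin K → ℝ) (hα : ∀ i j, 0 ≤ α i j) :
    0 ≤ Dopt α := by
  have hmem : sumGdof α (fun _ => 0) ∈ {x : ℝ | ∃ r : Fin K → ℝ, (∀ k, r k ≤ 0) ∧ x = sumGdof α r} :=
    ⟨fun _ => 0, fun _ => le_rfl, rfl⟩
  have h0 : (0:ℝ) ≤ sumGdof α (fun _ => 0) := Finset.sum_nonneg fun k _ => gdof_nonneg _ _ _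
  exact h0.trans (le_csSup (bddAbove_gdofSet α hα) hmem)

/-- removing a user `i` with zero GDoF (in an allocation achieving
`D_{Σ,o}`) cannot decrease `D_{Σ,o}` nor increase `D_{Σ,b}`, hence cannot decrease
the OPC/BPC gain. -/
theorem stmt_13 (n : ℕ) (hn : 1 ≤ n)
    (α : Fin (n + 1) → Fin (n + 1) → ℝ) (hα : ∀ i j, 0 ≤ α i j)
    (r : Fin (n + 1) → ℝ) (hr : ∀ k, r k ≤ 0)
    (hach : sumGdof α r = Dopt α) (i : Fin (n + 1)) (hi : gdof α r i = 0)
    (α' : Fin n → Fin n → ℝ)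
    (hα' : ∀ j k : Fin n, α' j k = α (i.succAbove j) (i.succAbove k)) :
    Dopt α ≤ Dopt α' ∧ Dbin α' ≤ Dbin α ∧
    (0 < Dbin α' → Dopt α / Dbin α ≤ Dopt α' / Dbin α') := by
  have hα'nn : ∀ j k, 0 ≤ α' j k := fun j k => (hα' j k) ▸ hα _ _
  set e : Fin n ↪ Fin (n+1) := i.succAboveEmb with he
  -- Part 1 : Dopt α ≤ Dopt α'
  have h1 : Dopt α ≤ Dopt α' := by
    set r' : Fin n → ℝ := fun k => r (i.succAbove k) with hr'
    have hkey : ∀ k : Fin n, gdof α r (i.succAbove k) ≤ gdof α' r' k := by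
      intro k
      unfold gdof
      apply pPart_mono
      rw [hα' k k]
      have hfold : ((Finset.univ.erase k).fold max 0 fun j => pPart (α' k j + r' j)) ≤
          ((Finset.univ.erase (i.succAbove k)).fold max 0 fun j => pPart (α (i.succAbove k) j + r j)) := by
        have heq : ((Finset.univ.erase k).fold max 0 fun j => pPart (α' k j + r' j)) =
            (((Finset.univ.erase k).map e).fold max 0 fun j => pPart (α (i.succAbove k) j + r j)) := by
          rw [Finset.fold_map]
          apply Finset.fold_congr
          intro j _
          simp only [Function.comp, hα' k j, hr']
          rfl
        rw [heq]
        apply fold_max_mono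
        intro x hx
        simp only [Finset.mem_map] at hx
        obtain ⟨j, hj, rfl⟩ := hx
        simp only [Finset.mem_erase] at hj ⊢
        exact ⟨fun hc => hj.1 (i.succAbove_right_injective hc), Finset.mem_univ _⟩
      linarith
    have hsum : sumGdof α r ≤ sumGdof α' r' := by
      unfold sumGdof
      rw [Fin.sum_univ_succAbove (fun k => gdof α r k) i, hi, zero_add]
      exact Finset.sum_le_sum fun k _ => hkey k
    have hmem : sumGdof α' r' ∈ {x : ℝ | ∃ s : Fin n → ℝ, (∀ k, s k ≤ 0) ∧ x = sumGdof α' s} :=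
      ⟨r', fun k => hr _, rfl⟩
    calc Dopt α = sumGdof α r := hach.symm
      _ ≤ sumGdof α' r' := hsum
      _ ≤ Dopt α' := le_csSup (bddAbove_gdofSet α' hα'nn) hmem
  -- Part 2 : Dbin α' ≤ Dbin α
  have h2 : Dbin α' ≤ Dbin α := by
    apply Finset.sup'_le
    intro T _
    have heq : binSum α' T = binSum α (T.map e) := by
      unfold binSum
      rw [Finset.sum_map]
      apply Finset.sum_congr rfl
      intro k hk
      have hfold : ((T.erase k).fold max 0 fun j => α' k j) =
          (((T.map e).erase (e k)).fold max 0 fun j => α (e k) j) := by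
        rw [← Finset.map_erase, Finset.fold_map]
        apply Finset.fold_congr
        intro j _
        exact hα' k j
      rw [hα' k k, hfold]
      rfl
    rw [heq]
    exact Finset.le_sup' (binSum α) (Finset.mem_univ _)
  refine ⟨h1, h2, fun hpos => ?_⟩
  have hpos' : 0 < Dbin α := lt_of_lt_of_le hpos h2
  exact div_le_div₀ (Dopt_nonneg α' hα'nn) h1 hpos h2
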